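/- Let V be a finite-dimensional nonzero vector space over an algebraically closed field F, and let A, A* be linear endomorphisms of V with no common proper nonzero invariant subspace. Suppose there exists an antiautomorphism † of End(V) with A† = A and (A*)† = A*. Then the pair (A, A*) on V is isomorphic to the pair (Ã, Ã*) on the dual space Ṽ, where à and Ã* are the dual (transpose) maps of A and A*: there exists a vector space isomorphism γ : V → Ṽ with γA = Ãγ and γA* = Ã*γ. -/

import Mathlib

theorem stmt_9 {F V : Type*} [Field F] [IsAlgClosed F] [AddCommGroup V] [Module F V]
    [FiniteDimensional F V] [Nontrivial V]
    (A Astar : Module.End F V)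
    (hirr : ∀ W : Submodule F V, (∀ v ∈ W, A v ∈ W) → (∀ v ∈ W, Astar v ∈ W) →
      W = ⊥ ∨ W = ⊤)
    (ρ : Module.End F V →ₗ[F] Module.End F V)
    (hbij : Function.Bijective ρ)
    (hanti : ∀ X Y : Module.End F V, ρ (X * Y) = ρ Y * ρ X)
    (hA : ρ A = A) (hAstar : ρ Astar = Astar) :
    ∃ γ : V ≃ₗ[F] Module.Dual F V,
      (∀ v : V, γ (A v) = A.dualMap (γ v)) ∧
      (∀ v : V, γ (Astar v) = Astar.dualMap (γ v)) := by
  classical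
  -- the composite σ X = (ρ X).dualMap is multiplicative
  set σ : Module.End F V → Module.End F (Module.Dual F V) :=
    fun X => (ρ X).dualMap with hσ
  have hσmul : ∀ X Y : Module.End F V, σ (X * Y) = σ X * σ Y := by
    intro X Y
    ext f v
    simp [hσ, hanti, LinearMap.dualMap_apply, Module.End.mul_apply]
  -- choose a nonzero vector and a functional with value 1 on it
  obtain ⟨v₀, hv₀⟩ := exists_ne (0 : V)
  have : ¬ (∀ φ : Module.Dual F V, φ v₀ = 0) := by
    rw [Module.forall_dual_apply_eq_zero_iff F v₀]; exact hv₀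
  push_neg at this
  obtain ⟨φ, hφ⟩ := this
  set f₀ : Module.Dual F V := (φ v₀)⁻¹ • φ with hf₀def
  have hf₀ : f₀ v₀ = 1 := by
    simp [hf₀def, inv_mul_cancel₀ hφ]
  -- rank-one idempotent
  set e : Module.End F V := f₀.smulRight v₀ with hedef
  have hee : e * e = e := by
    ext u
    simp [hedef, Module.End.mul_apply, hf₀, smul_smul]
  have he0 : e ≠ 0 := by
    intro h
    apply hv₀
    have : e v₀ = 0 := by rw [h]; rfl
    rwa [hedef, LinearMap.smulRight_apply, hf₀, one_smul] at this
  -- dualMap of a nonzero map is nonzero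
  have hdual : ∀ X : Module.End F V, X.dualMap = 0 → X = 0 := by
    intro X h
    ext v
    rw [LinearMap.zero_apply, ← Module.forall_dual_apply_eq_zero_iff F (X v)]
    intro ψ
    have := DFunLike.congr_fun h ψ
    exact DFunLike.congr_fun this v
  have hσe : σ e ≠ 0 := by
    intro h
    apply he0
    have hρe : ρ e = 0 := hdual _ h
    exact hbij.injective (by rw [hρe, map_zero])
  -- a nonzero vector in the range of σ e, fixed by σ e
  have : ∃ f : Module.Dual F V, σ e f ≠ 0 := by
    by_contra h
    push_neg at h
    exact hσe (LinearMap.ext h)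
  obtain ⟨f, hf⟩ := this
  set g₀ : Module.Dual F V := σ e f with hg₀def
  have hg₀ : g₀ ≠ 0 := hf
  have hgfix : σ e g₀ = g₀ := by
    rw [hg₀def, ← Module.End.mul_apply, ← hσmul, hee]
  -- the intertwiner
  have hsr_add : ∀ x y : V, f₀.smulRight (x + y) = f₀.smulRight x + f₀.smulRight y := by
    intro x y; ext u; simp [smul_add]
  have hsr_smul : ∀ (c : F) (x : V), f₀.smulRight (c • x) = c • f₀.smulRight x := by
    intro c x; ext u; simp [smul_smul, mul_comm]
  set γ₀ : V →ₗ[F] Module.Dual F V :=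
    { toFun := fun v => σ (f₀.smulRight v) g₀
      map_add' := by
        intro x y
        simp only [hsr_add, hσ, map_add]
        ext u
        simp
      map_smul' := by
        intro c x
        simp only [hsr_smul, hσ, map_smul, RingHom.id_apply]
        ext u
        simp } with hγ₀def
  have hkey : ∀ (X : Module.End F V) (v : V), γ₀ (X v) = σ X (γ₀ v) := by
    intro X v
    have h1 : f₀.smulRight (X v) = X * f₀.smulRight v := by
      ext u; simp [Module.End.mul_apply]
    show σ (f₀.smulRight (X v)) g₀ = σ X (σ (f₀.smulRight v) g₀)
    rw [h1, hσmul, Module.End.mul_apply]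
  have hγv₀ : γ₀ v₀ = g₀ := by
    show σ (f₀.smulRight v₀) g₀ = g₀
    rw [← hedef, hgfix]
  -- injectivity via irreducibility
  have hker : LinearMap.ker γ₀ = ⊥ := by
    rcases hirr (LinearMap.ker γ₀)
        (fun v hv => by
          rw [LinearMap.mem_ker] at hv ⊢
          rw [hkey, hv, map_zero])
        (fun v hv => by
          rw [LinearMap.mem_ker] at hv ⊢
          rw [hkey, hv, map_zero]) with h | h
    · exact h
    · exfalso
      apply hg₀
      rw [← hγv₀]
      have : v₀ ∈ LinearMap.ker γ₀ := by rw [h]; trivial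
      exact this
  have hinj : Function.Injective γ₀ := LinearMap.ker_eq_bot.mp hker
  have hsurj : Function.Surjective γ₀ :=
    (LinearMap.injective_iff_surjective_of_finrank_eq_finrank
      (Subspace.dual_finrank_eq (K := F) (V := V)).symm).mp hinj
  refine ⟨LinearEquiv.ofBijective γ₀ ⟨hinj, hsurj⟩, ?_, ?_⟩
  · intro v
    show γ₀ (A v) = A.dualMap (γ₀ v)
    rw [hkey]
    simp [hσ, hA]
  · intro v
    show γ₀ (Astar v) = Astar.dualMap (γ₀ v)
    rw [hkey]
    simp [hσ, hAstar]
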